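/- arXiv:0811.3397 — 3 statements merged into one kernel-verified Lean document; each statement's English description precedes it below -/
import Mathlib

section
/- There exists a complex vector bundle monomorphism F₀ : TS² → ℂ² × S² (the trivial rank-2 complex bundle over S²), i.e. a complex-linear bundle map injective on every fiber. -/
noncomputable section

abbrev E3 := EuclideanSpace ℝ (Fin 3)
abbrev S2 := Metric.sphere (0 : E3) 1

/-- The almost complex structure on the tangent planes of `S² ⊂ ℝ³`:
`J_z v = z × v` (cross product). -/
noncomputable def sphereJ (z : S2) (v : E3) : E3 :=
  (EuclideanSpace.equiv (Fin 3) ℝ).symm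
    (crossProduct (EuclideanSpace.equiv (Fin 3) ℝ (z : E3))
      (EuclideanSpace.equiv (Fin 3) ℝ v))

/-- The candidate bundle monomorphism, as a linear map for each `z`. -/
noncomputable def myFlin (z : E3) : E3 →ₗ[ℝ] ℂ × ℂ where
  toFun v := (⟨v 0, -(z 1 * v 2 - z 2 * v 1)⟩, ⟨v 1, -(z 2 * v 0 - z 0 * v 2)⟩)
  map_add' v w := by
    simp [Prod.ext_iff, Complex.ext_iff]
    ring_nf
    constructor <;> constructor <;> ring
  map_smul' c v := by
    simp [Prod.ext_iff, Complex.ext_iff, Complex.ofReal_mul]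
    ring_nf
    constructor <;> trivial

noncomputable def myF (z : E3) : E3 →L[ℝ] ℂ × ℂ :=
  LinearMap.toContinuousLinearMap (myFlin z)

/-- There exists a complex vector bundle monomorphism `F₀ : TS² → ℂ² × S²`:
a continuous family of real-linear maps on ambient `ℝ³` which, restricted to
each tangent plane `T_zS² = z^⊥`, is complex linear (for the complex structure
`J_z = z × ·` on `T_zS²` and `i` on `ℂ²`) and injective. -/
theorem stmt1 :
    ∃ F : S2 → (E3 →L[ℝ] ℂ × ℂ),
      Continuous F ∧
      (∀ (z : S2) (v : E3), (inner ℝ (z : E3) v : ℝ) = 0 →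
        F z (sphereJ z v) = Complex.I • F z v) ∧
      (∀ (z : S2) (v : E3), (inner ℝ (z : E3) v : ℝ) = 0 →
        F z v = 0 → v = 0) := by
  refine ⟨fun z => myF (z : E3), ?_, ?_, ?_⟩
  · rw [continuous_clm_apply]
    intro v
    have hc : ∀ i : Fin 3, Continuous (fun z : S2 => (z : E3) i) := fun i =>
      (EuclideanSpace.proj i).continuous.comp continuous_subtype_val
    have : ∀ z : S2, myF (z : E3) v =
        ((⟨v 0, -((z : E3) 1 * v 2 - (z : E3) 2 * v 1)⟩ : ℂ),
         (⟨v 1, -((z : E3) 2 * v 0 - (z : E3) 0 * v 2)⟩ : ℂ)) := fun z => rfl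
    simp only [this, Complex.mk_eq_add_mul_I]
    have c1 : Continuous fun x : S2 => -((x : E3) 1 * v 2 - (x : E3) 2 * v 1) :=
      ((((hc 1).mul continuous_const).sub ((hc 2).mul continuous_const)).neg)
    have c2 : Continuous fun x : S2 => -((x : E3) 2 * v 0 - (x : E3) 0 * v 2) :=
      ((((hc 2).mul continuous_const).sub ((hc 0).mul continuous_const)).neg)
    exact (continuous_const.add ((Complex.continuous_ofReal.comp c1).mul continuous_const)).prodMk
      (continuous_const.add ((Complex.continuous_ofReal.comp c2).mul continuous_const))
  · intro z v hv
    have hz : (z : E3) 0 ^ 2 + (z : E3) 1 ^ 2 + (z : E3) 2 ^ 2 = 1 := by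
      have hn : ‖(z : E3)‖ = 1 := by simpa using mem_sphere_zero_iff_norm.mp z.2
      have h2 : (inner ℝ (z : E3) (z : E3) : ℝ) = 1 := by
        rw [real_inner_self_eq_norm_sq, hn]; norm_num
      have h2' : (z:E3) 0 * (z:E3) 0 + (z:E3) 1 * (z:E3) 1 + (z:E3) 2 * (z:E3) 2 = 1 := by
        rw [← h2, PiLp.inner_apply, Fin.sum_univ_three]; simp; ring
      nlinarith [h2']
    have hv' : (z : E3) 0 * v 0 + (z : E3) 1 * v 1 + (z : E3) 2 * v 2 = 0 := by
      simpa [PiLp.inner_apply, Fin.sum_univ_three, mul_comm] using hv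
    have hJ : ∀ i, sphereJ z v i = (crossProduct ((z : E3) : Fin 3 → ℝ) (v : Fin 3 → ℝ)) i :=
      fun i => rfl
    show myFlin _ _ = Complex.I • myFlin _ _
    have h0 := hJ 0; have h1 := hJ 1; have h2 := hJ 2
    rw [cross_apply] at h0 h1 h2
    simp only [Matrix.cons_val_zero, Matrix.cons_val_one, Matrix.head_cons,
      Matrix.cons_val_two, Matrix.tail_cons] at h0 h1 h2
    simp only [myFlin, LinearMap.coe_mk, AddHom.coe_mk, Prod.ext_iff,
      Complex.ext_iff, Prod.smul_fst, Prod.smul_snd, smul_eq_mul,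
      Complex.mul_re, Complex.mul_im, Complex.I_re, Complex.I_im, h0, h1, h2]
    refine ⟨⟨by ring, ?_⟩, by ring, ?_⟩
    · linear_combination v 0 * hz - (z : E3) 0 * hv'
    · linear_combination v 1 * hz - (z : E3) 1 * hv'
  · intro z v hv h0
    have hz : (z : E3) 0 ^ 2 + (z : E3) 1 ^ 2 + (z : E3) 2 ^ 2 = 1 := by
      have hn : ‖(z : E3)‖ = 1 := by simpa using mem_sphere_zero_iff_norm.mp z.2
      have h2 : (inner ℝ (z : E3) (z : E3) : ℝ) = 1 := by
        rw [real_inner_self_eq_norm_sq, hn]; norm_num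
      have h2' : (z:E3) 0 * (z:E3) 0 + (z:E3) 1 * (z:E3) 1 + (z:E3) 2 * (z:E3) 2 = 1 := by
        rw [← h2, PiLp.inner_apply, Fin.sum_univ_three]; simp; ring
      nlinarith [h2']
    have hv' : (z : E3) 0 * v 0 + (z : E3) 1 * v 1 + (z : E3) 2 * v 2 = 0 := by
      simpa [PiLp.inner_apply, Fin.sum_univ_three, mul_comm] using hv
    have h0' : myFlin (z : E3) v = 0 := h0
    simp only [myFlin, LinearMap.coe_mk, AddHom.coe_mk, Prod.ext_iff, Complex.ext_iff,
      Prod.fst_zero, Prod.snd_zero, Complex.zero_re, Complex.zero_im] at h0'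
    obtain ⟨⟨e1, e2⟩, e3, e4⟩ := h0'
    have hv0 : v 0 = 0 := e1
    have hv1 : v 1 = 0 := e3
    have h5 : (z : E3) 2 * v 2 = 0 := by rw [hv0, hv1] at hv'; linarith [hv']
    have h6 : (z : E3) 1 * v 2 = 0 := by rw [hv1] at e2; linarith [e2]
    have h7 : (z : E3) 0 * v 2 = 0 := by rw [hv0] at e4; linarith [e4]
    have hv2 : v 2 = 0 := by
      linear_combination (-(v 2)) * hz + (z : E3) 0 * h7 + (z : E3) 1 * h6 + (z : E3) 2 * h5
    ext i
    fin_cases i <;> simpa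
end
end

section
/- Let D : H₁ → H₂ be a bounded surjective Fredholm operator between Hilbert spaces with kernel K, let C ⊂ H₂ be a finite-dimensional subspace serving as a complement to the image of a reference operator, and suppose μ = μ₀ + μ₁ ∈ H₂ with μ₀ ∈ C, μ₁ ∈ C^⊥, annihilates the image of D_t = D + tY for a compact perturbation Y and small t ≠ 0 as in the Neumann-series setup of the paper. Then μ = 0; consequently D_t has dense image and, being Fredholm with closed image, is surjective. -/
noncomputable section

lemma stmt12_aux (A B t n0 n1 : ℝ) (hA1 : 1 ≤ A) (hB0 : 0 ≤ B)
    (hn0 : 0 ≤ n0) (hn1 : 0 ≤ n1)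
    (h1 : n0 ^ 2 ≤ A * n0 * n1) (h2 : n1 ^ 2 ≤ |t| * B * n1 * (n0 + n1))
    (ht : |t| < 1 / (B * (A + 1) + 1)) : n1 = 0 ∧ n0 = 0 := by
  have hd : (0:ℝ) < B * (A + 1) + 1 := by positivity
  rw [lt_div_iff₀ hd] at ht
  have htq : |t| * (B * (A + 1)) < 1 := by nlinarith [abs_nonneg t]
  have hn0A : n0 ≤ A * n1 := by
    rcases eq_or_lt_of_le hn0 with h0 | h0
    · rw [← h0]; positivity
    · nlinarith
  have hn1z : n1 = 0 := by
    by_contra hne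
    have hpos : 0 < n1 := lt_of_le_of_ne hn1 (Ne.symm hne)
    have h9 : n0 + n1 ≤ (A + 1) * n1 := by nlinarith
    have h10 : n1 ^ 2 ≤ (|t| * (B * (A + 1))) * n1 ^ 2 := by
      calc n1 ^ 2 ≤ |t| * B * n1 * (n0 + n1) := h2
        _ ≤ |t| * B * n1 * ((A + 1) * n1) :=
            mul_le_mul_of_nonneg_left h9
              (mul_nonneg (mul_nonneg (abs_nonneg t) hB0) hn1)
        _ = (|t| * (B * (A + 1))) * n1 ^ 2 := by ring
    have hsq : 0 < n1 ^ 2 := by positivity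
    have h11 := mul_lt_mul_of_pos_right htq hsq
    nlinarith
  refine ⟨hn1z, ?_⟩
  have hle : n0 ^ 2 ≤ 0 := by rw [hn1z] at h1; nlinarith
  have := le_antisymm hle (by positivity)
  exact pow_eq_zero_iff two_ne_zero |>.mp this

set_option synthInstance.maxHeartbeats 1000000
set_option maxHeartbeats 2000000

/-- Surjectivity of the perturbed operator `D_t = D + tY` in the setting of
Lemma `D_st`: `D` is Fredholm with finite-dimensional kernel and cokernel `C`
(realized as a subspace of `H₂` with `C^⊥ = range D`), `Y` is a compact
perturbation such that `π_C ∘ Y` restricted to `ker D` is surjective onto `C`,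
and `D_t` has closed range.  Then for all sufficiently small `t ≠ 0`, any
`μ = μ₀ + μ₁` annihilating the image of `D_t` vanishes; consequently `D_t`
has dense image and, being Fredholm with closed image, is surjective. -/
theorem stmt12 {H₁ H₂ : Type*}
    [NormedAddCommGroup H₁] [InnerProductSpace ℝ H₁] [CompleteSpace H₁]
    [NormedAddCommGroup H₂] [InnerProductSpace ℝ H₂] [CompleteSpace H₂]
    (D Y : H₁ →L[ℝ] H₂)
    (C : Submodule ℝ H₂) (hCfin : FiniteDimensional ℝ C)
    (hKfin : FiniteDimensional ℝ (LinearMap.ker (D : H₁ →ₗ[ℝ] H₂)))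
    (hrange : (Cᗮ : Submodule ℝ H₂) = LinearMap.range (D : H₁ →ₗ[ℝ] H₂))
    (hYcompact : IsCompactOperator Y)
    (hLsurj : ∀ μ₀ ∈ C, ∃ v ∈ LinearMap.ker (D : H₁ →ₗ[ℝ] H₂), Y v - μ₀ ∈ Cᗮ)
    (hclosed : ∀ t : ℝ,
      IsClosed ((LinearMap.range ((D + t • Y : H₁ →L[ℝ] H₂) : H₁ →ₗ[ℝ] H₂) : Submodule ℝ H₂) : Set H₂)) :
    ∃ t₀ : ℝ, 0 < t₀ ∧ ∀ t : ℝ, t ≠ 0 → |t| < t₀ →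
      (∀ μ : H₂, (∀ ξ : H₁, (inner ℝ ((D + t • Y) ξ) μ : ℝ) = 0) → μ = 0) ∧
      Function.Surjective (D + t • Y) := by
  haveI := hCfin
  haveI : CompleteSpace C := FiniteDimensional.complete ℝ C
  have hRc : IsClosed ((LinearMap.range (D : H₁ →ₗ[ℝ] H₂) : Submodule ℝ H₂) : Set H₂) := by
    rw [← hrange]; exact Submodule.isClosed_orthogonal C
  haveI : CompleteSpace (LinearMap.range (D : H₁ →ₗ[ℝ] H₂)) := hRc.completeSpace_coe
  set π := C.orthogonalProjectionOnto with hπ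
  -- bounded right inverse of D onto its range
  let D' : H₁ →L[ℝ] LinearMap.range (D : H₁ →ₗ[ℝ] H₂) :=
    D.codRestrict _ fun x => LinearMap.mem_range_self _ x
  have hD'surj : Function.Surjective D' := by
    rintro ⟨y, x, rfl⟩; exact ⟨x, rfl⟩
  obtain ⟨c, hc0, hc⟩ := D'.exists_preimage_norm_le hD'surj
  -- the map L = π ∘ Y restricted to ker D, and its right inverse
  let L : (LinearMap.ker (D : H₁ →ₗ[ℝ] H₂)) →ₗ[ℝ] C :=
    ((π : H₂ →ₗ[ℝ] C).comp (Y : H₁ →ₗ[ℝ] H₂)).comp (LinearMap.ker (D : H₁ →ₗ[ℝ] H₂)).subtype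
  have hLs : Function.Surjective L := by
    intro m
    obtain ⟨v, hv, hw⟩ := hLsurj m m.2
    refine ⟨⟨v, hv⟩, ?_⟩
    have h1 : Y v = (m : H₂) + (Y v - m) := by abel
    have : L ⟨v, hv⟩ = π (Y v) := rfl
    rw [this, h1, map_add, Submodule.orthogonalProjectionOnto_mem_subspace_eq_self,
      Submodule.orthogonalProjectionOnto_apply_of_mem_orthogonal hw, add_zero]
  obtain ⟨σ, hσ⟩ := L.exists_rightInverse_of_surjective (LinearMap.range_eq_top.mpr hLs)
  let σ' := LinearMap.toContinuousLinearMap σ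
  set c₁ := ‖σ'‖ with hc₁
  have hc₁0 : 0 ≤ c₁ := hc₁ ▸ norm_nonneg σ'
  set A : ℝ := ‖Y‖ * c₁ + 1 with hA
  have hA1 : 1 ≤ A := by nlinarith [norm_nonneg Y, hc₁0]
  set B : ℝ := c * ‖Y‖ with hB
  have hB0 : 0 ≤ B := by positivity
  clear_value c₁ A B
  refine ⟨1 / (B * (A + 1) + 1), by positivity, ?_⟩
  intro t ht htlt
  have key : ∀ μ : H₂, (∀ ξ : H₁, (inner ℝ ((D + t • Y) ξ) μ : ℝ) = 0) → μ = 0 := by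
    intro μ hμ
    set m0 : C := π μ with hm0
    set μ₀ : H₂ := (m0 : H₂) with hμ₀
    set μ₁ : H₂ := μ - μ₀ with hμ₁def
    have hμsum : μ = μ₀ + μ₁ := by rw [hμ₁def]; abel
    have hμ₁mem : μ₁ ∈ Cᗮ := by
      rw [hμ₁def, hμ₀, hm0, hπ]
      exact C.sub_starProjection_mem_orthogonal μ
    have h01 : (inner ℝ μ₀ μ₁ : ℝ) = 0 := hμ₁mem μ₀ m0.2
    -- Step 1
    set v : LinearMap.ker (D : H₁ →ₗ[ℝ] H₂) := σ m0 with hv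
    have hLv : π (Y (v : H₁)) = m0 := by
      have := LinearMap.congr_fun hσ m0
      simpa [L] using this
    have hwmem : Y (v : H₁) - μ₀ ∈ Cᗮ := by
      have h : Y (v : H₁) - ((π (Y (v : H₁)) : C) : H₂) ∈ Cᗮ := C.sub_starProjection_mem_orthogonal (Y (v : H₁))
      rw [hLv, ← hμ₀] at h
      exact h
    set w : H₂ := Y (v : H₁) - μ₀ with hw
    have hYvμ : (inner ℝ (Y (v : H₁)) μ : ℝ) = 0 := by
      have := hμ (v : H₁)
      have hDv : D (v : H₁) = 0 := v.2
      rw [ContinuousLinearMap.add_apply, ContinuousLinearMap.smul_apply, hDv, zero_add,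
        real_inner_smul_left] at this
      exact (mul_eq_zero.mp this).resolve_left ht
    have hstep1 : ‖μ₀‖ ^ 2 = -(inner ℝ w μ₁ : ℝ) := by
      have hYv : Y (v : H₁) = μ₀ + w := by rw [hw]; abel
      have hwμ₀ : (inner ℝ w μ₀ : ℝ) = 0 := by
        rw [real_inner_comm]; exact hwmem μ₀ m0.2
      have h := hYvμ
      rw [hYv, hμsum, inner_add_left, inner_add_right, inner_add_right, h01,
        hwμ₀, real_inner_self_eq_norm_sq] at h
      linarith
    have hvnorm : ‖(v : H₁)‖ ≤ c₁ * ‖μ₀‖ := by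
      have h := σ'.le_opNorm m0
      have e1 : ‖σ' m0‖ = ‖(v : H₁)‖ := rfl
      have e2 : ‖m0‖ = ‖μ₀‖ := rfl
      rw [e1, e2, ← hc₁] at h
      exact h
    have hwnorm : ‖w‖ ≤ A * ‖μ₀‖ := by
      have h1 : ‖w‖ ≤ ‖Y (v : H₁)‖ + ‖μ₀‖ := norm_sub_le _ _
      have h2 : ‖Y (v : H₁)‖ ≤ ‖Y‖ * ‖(v : H₁)‖ := Y.le_opNorm _
      have h3 : ‖Y‖ * ‖(v : H₁)‖ ≤ ‖Y‖ * (c₁ * ‖μ₀‖) :=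
        mul_le_mul_of_nonneg_left hvnorm (norm_nonneg _)
      rw [hA]; nlinarith [norm_nonneg μ₀]
    have hμ₀le : ‖μ₀‖ ^ 2 ≤ A * ‖μ₀‖ * ‖μ₁‖ := by
      have h4 : -(inner ℝ w μ₁ : ℝ) ≤ ‖w‖ * ‖μ₁‖ := by
        have := abs_real_inner_le_norm w μ₁
        cases' abs_le.mp this with h _
        linarith
      calc ‖μ₀‖ ^ 2 = -(inner ℝ w μ₁ : ℝ) := hstep1
        _ ≤ ‖w‖ * ‖μ₁‖ := h4
        _ ≤ A * ‖μ₀‖ * ‖μ₁‖ := by nlinarith [norm_nonneg μ₁]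
    clear_value w v μ₁ μ₀ m0
    -- Step 2
    have hμ₁range : μ₁ ∈ LinearMap.range (D : H₁ →ₗ[ℝ] H₂) := hrange ▸ hμ₁mem
    obtain ⟨x, hx, hxnorm⟩ := hc ⟨μ₁, hμ₁range⟩
    have hDx : D x = μ₁ := congrArg Subtype.val hx
    have hxnorm' : ‖x‖ ≤ c * ‖μ₁‖ := by simpa using hxnorm
    have hstep2 : ‖μ₁‖ ^ 2 = -(t * (inner ℝ (Y x) μ : ℝ)) := by
      have := hμ x
      rw [ContinuousLinearMap.add_apply, ContinuousLinearMap.smul_apply, hDx,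
        inner_add_left, real_inner_smul_left] at this
      have h01' : (inner ℝ μ₁ μ₀ : ℝ) = 0 := by rw [real_inner_comm]; exact h01
      have hinner : (inner ℝ μ₁ μ : ℝ) = ‖μ₁‖ ^ 2 := by
        rw [hμsum, inner_add_right, h01', real_inner_self_eq_norm_sq, zero_add]
      rw [hinner] at this
      linarith
    have hμ₁le : ‖μ₁‖ ^ 2 ≤ |t| * B * ‖μ₁‖ * (‖μ₀‖ + ‖μ₁‖) := by
      have h4 : |(inner ℝ (Y x) μ : ℝ)| ≤ ‖Y x‖ * ‖μ‖ := abs_real_inner_le_norm _ _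
      have h5 : ‖Y x‖ ≤ ‖Y‖ * ‖x‖ := Y.le_opNorm _
      have h6 : ‖μ‖ ≤ ‖μ₀‖ + ‖μ₁‖ := by rw [hμsum]; exact norm_add_le _ _
      have h7 : -(t * (inner ℝ (Y x) μ : ℝ)) ≤ |t| * |(inner ℝ (Y x) μ : ℝ)| := by
        calc -(t * (inner ℝ (Y x) μ : ℝ)) ≤ |t * (inner ℝ (Y x) μ : ℝ)| := neg_le_abs _
          _ = |t| * |(inner ℝ (Y x) μ : ℝ)| := abs_mul _ _
      rw [hstep2]
      have habs : 0 ≤ |t| := abs_nonneg t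
      have hYx2 : ‖Y x‖ ≤ B * ‖μ₁‖ := by
        have := mul_le_mul_of_nonneg_left hxnorm' (norm_nonneg Y)
        rw [hB]; nlinarith
      have h8 : ‖Y x‖ * ‖μ‖ ≤ (B * ‖μ₁‖) * (‖μ₀‖ + ‖μ₁‖) :=
        mul_le_mul hYx2 h6 (norm_nonneg μ)
          (mul_nonneg hB0 (norm_nonneg μ₁))
      calc -(t * (inner ℝ (Y x) μ : ℝ)) ≤ |t| * |(inner ℝ (Y x) μ : ℝ)| := h7
        _ ≤ |t| * (‖Y x‖ * ‖μ‖) := mul_le_mul_of_nonneg_left h4 habs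
        _ ≤ |t| * ((B * ‖μ₁‖) * (‖μ₀‖ + ‖μ₁‖)) := mul_le_mul_of_nonneg_left h8 habs
        _ = |t| * B * ‖μ₁‖ * (‖μ₀‖ + ‖μ₁‖) := by ring
    -- conclude
    obtain ⟨hn1, hn0⟩ := stmt12_aux A B t ‖μ₀‖ ‖μ₁‖ hA1 hB0
      (norm_nonneg _) (norm_nonneg _) hμ₀le hμ₁le htlt
    have hμ₁z : μ₁ = 0 := norm_eq_zero.mp hn1
    have hμ₀z : μ₀ = 0 := norm_eq_zero.mp hn0
    rw [hμsum, hμ₀z, hμ₁z, add_zero]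
  refine ⟨key, ?_⟩
  -- surjectivity
  set R : Submodule ℝ H₂ := LinearMap.range ((D + t • Y : H₁ →L[ℝ] H₂) : H₁ →ₗ[ℝ] H₂) with hR
  haveI : CompleteSpace R := (hclosed t).completeSpace_coe
  have hRbot : Rᗮ = ⊥ := by
    rw [Submodule.eq_bot_iff]
    intro μ hμ
    exact key μ fun ξ => hμ _ (LinearMap.mem_range_self _ ξ)
  have hRtop : R = ⊤ := Submodule.orthogonal_eq_bot_iff.mp hRbot
  exact LinearMap.range_eq_top.mp hRtop
end
end

section
/- Let 𝒜 be the set of injective real-linear maps A : ℂ → ℝ⁴ (where ℝ⁴ carries the standard inner product). There is a well-defined continuous map Φ : 𝒜 → 𝒥 to the space of complex structures on ℝ⁴, assigning to A the unique J ∈ 𝒥 that preserves the splitting ℝ⁴ = V ⊕ W with V = im A and W = V^⊥, makes A complex linear (J ∘ A = A ∘ i), and on an oriented orthonormal basis (e₁, e₂) of W satisfies ⟨Je₁, e₂⟩ = 1 and ⟨Je₁, e₁⟩ = 0; uniqueness holds because a complex structure on a 2-dimensional oriented inner product space compatible with a given orientation is unique. -/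
noncomputable section

abbrev E4 := EuclideanSpace ℝ (Fin 4)

namespace S15

def ip (x y : Fin 4 → ℝ) : ℝ := x 0 * y 0 + x 1 * y 1 + x 2 * y 2 + x 3 * y 3
def dd (a b : Fin 4 → ℝ) : ℝ := ip a a * ip b b - ip a b ^ 2
def alph (a b v : Fin 4 → ℝ) : ℝ := ip b b * ip v a - ip a b * ip v b
def beta (a b v : Fin 4 → ℝ) : ℝ := ip a a * ip v b - ip a b * ip v a
def nvec (a b v : Fin 4 → ℝ) : Fin 4 → ℝ := fun k => alph a b v * b k - beta a b v * a k
def mvec (a b v : Fin 4 → ℝ) : Fin 4 → ℝ := ![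
  v 1*(a 2*b 3 - a 3*b 2) + v 2*(a 3*b 1 - a 1*b 3) + v 3*(a 1*b 2 - a 2*b 1),
  v 0*(a 3*b 2 - a 2*b 3) + v 2*(a 0*b 3 - a 3*b 0) + v 3*(a 2*b 0 - a 0*b 2),
  v 0*(a 1*b 3 - a 3*b 1) + v 1*(a 3*b 0 - a 0*b 3) + v 3*(a 0*b 1 - a 1*b 0),
  v 0*(a 2*b 1 - a 1*b 2) + v 1*(a 0*b 2 - a 2*b 0) + v 2*(a 1*b 0 - a 0*b 1)]
def nent (a b : Fin 4 → ℝ) : Fin 4 → Fin 4 → ℝ := fun k l =>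
  ip b b * a l * b k - ip a b * b l * b k - ip a a * b l * a k + ip a b * a l * a k
def ment (a b : Fin 4 → ℝ) : Fin 4 → Fin 4 → ℝ := ![
  ![0, a 2*b 3 - a 3*b 2, a 3*b 1 - a 1*b 3, a 1*b 2 - a 2*b 1],
  ![a 3*b 2 - a 2*b 3, 0, a 0*b 3 - a 3*b 0, a 2*b 0 - a 0*b 2],
  ![a 1*b 3 - a 3*b 1, a 3*b 0 - a 0*b 3, 0, a 0*b 1 - a 1*b 0],
  ![a 2*b 1 - a 1*b 2, a 0*b 2 - a 2*b 0, a 1*b 0 - a 0*b 1, 0]]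
def jent (a b : Fin 4 → ℝ) (t u : ℝ) : Fin 4 → Fin 4 → ℝ := fun k l =>
  t * nent a b k l + u * ment a b k l
def mk (m : Fin 4 → Fin 4 → ℝ) : E4 →L[ℝ] E4 :=
  LinearMap.toContinuousLinearMap
  { toFun := fun v => WithLp.toLp 2 (fun k => ∑ l, m k l * v l : Fin 4 → ℝ)
    map_add' := by
      intro v w; ext k
      simp [Finset.sum_add_distrib, mul_add]
    map_smul' := by
      intro c v; ext k
      simp [Finset.mul_sum]; congr 1; funext l; ring }
lemma mk_apply (m : Fin 4 → Fin 4 → ℝ) (v : E4) (k : Fin 4) :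
    mk m v k = ∑ l, m k l * v l := rfl
lemma mk_add (m m' : Fin 4 → Fin 4 → ℝ) : mk (m + m') = mk m + mk m' := by
  ext v k
  simp [mk_apply, Finset.sum_add_distrib, add_mul]
lemma mk_smul (c : ℝ) (m : Fin 4 → Fin 4 → ℝ) : mk (c • m) = c • mk m := by
  ext v k
  simp [mk_apply, Finset.mul_sum]
  congr 1; funext l; ring
def mkL : (Fin 4 → Fin 4 → ℝ) →ₗ[ℝ] (E4 →L[ℝ] E4) :=
  { toFun := mk, map_add' := mk_add, map_smul' := mk_smul }
lemma mk_cont : Continuous mk := mkL.continuous_of_finiteDimensional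
def jclm (a b : Fin 4 → ℝ) (t u : ℝ) : E4 →L[ℝ] E4 := mk (jent a b t u)
lemma jclm_apply (a b : Fin 4 → ℝ) (t u : ℝ) (v : E4) (k : Fin 4) :
    jclm a b t u v k = t * nvec a b v k + u * mvec a b v k := by
  rw [jclm, mk_apply]
  fin_cases k <;>
    simp [Fin.sum_univ_four, jent, nent, ment, nvec, mvec, alph, beta, ip] <;> ring

lemma h4 (a b v : Fin 4 → ℝ) (k : Fin 4) :
    mvec a b (mvec a b v) k = -dd a b * v k + alph a b v * a k + beta a b v * b k := by
  fin_cases k <;> simp [mvec, dd, alph, beta, ip] <;> ring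
lemma h3 (a b v : Fin 4 → ℝ) (k : Fin 4) : nvec a b (mvec a b v) k = 0 := by
  fin_cases k <;> simp [nvec, mvec, alph, beta, ip] <;> ring
lemma hmn (a b v : Fin 4 → ℝ) (k : Fin 4) : mvec a b (nvec a b v) k = 0 := by
  fin_cases k <;> simp [nvec, mvec, alph, beta, ip] <;> ring
lemma h9 (a b v : Fin 4 → ℝ) :
    ip (mvec a b v) (mvec a b v) = dd a b * ip v v - alph a b v * ip v a - beta a b v * ip v b := by
  simp [mvec, dd, alph, beta, ip]; ring
lemma h8 (a b v : Fin 4 → ℝ) : ip (mvec a b v) v = 0 := by simp [mvec, ip]; ring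
lemma h6a (a b v : Fin 4 → ℝ) : ip (mvec a b v) a = 0 := by simp [mvec, ip]; ring
lemma h6b (a b v : Fin 4 → ℝ) : ip (mvec a b v) b = 0 := by simp [mvec, ip]; ring
lemma h1 (a b : Fin 4 → ℝ) (r s : ℝ) (k : Fin 4) :
    nvec a b (fun i => r * a i + s * b i) k = dd a b * (r * b k - s * a k) := by
  simp [nvec, dd, alph, beta, ip]; ring
lemma h2 (a b : Fin 4 → ℝ) (r s : ℝ) (k : Fin 4) :
    mvec a b (fun i => r * a i + s * b i) k = 0 := by
  fin_cases k <;> simp [mvec, ip] <;> ring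
lemma h5 (a b v : Fin 4 → ℝ) (k : Fin 4) :
    nvec a b (nvec a b v) k = -dd a b * (alph a b v * a k + beta a b v * b k) := by
  simp [nvec, dd, alph, beta, ip]; ring
lemma nlin (a b x y : Fin 4 → ℝ) (t u : ℝ) (k : Fin 4) :
    nvec a b (fun i => t * x i + u * y i) k = t * nvec a b x k + u * nvec a b y k := by
  simp [nvec, alph, beta, ip]; ring
lemma mlin (a b x y : Fin 4 → ℝ) (t u : ℝ) (k : Fin 4) :
    mvec a b (fun i => t * x i + u * y i) k = t * mvec a b x k + u * mvec a b y k := by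
  fin_cases k <;> simp [mvec, ip] <;> ring

variable {a b : Fin 4 → ℝ} {t u : ℝ}

lemma jcoe (v : E4) :
    (jclm a b t u v).ofLp = (fun i => t * nvec a b v i + u * mvec a b v i : Fin 4 → ℝ) :=
  funext (jclm_apply a b t u v)

lemma jsq (ht : t * dd a b = 1) (hu : u ^ 2 * dd a b = 1) (v : E4) :
    jclm a b t u (jclm a b t u v) = -v := by
  ext k
  rw [jclm_apply]
  rw [jcoe v, nlin, mlin, h5, h3, hmn, h4]
  have : (-v : E4) k = -(v k) := rfl
  rw [this]
  linear_combination (t * (alph a b v * a k + beta a b v * b k) - v k) * hu -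
    (alph a b v * a k + beta a b v * b k) * (u ^ 2 + t) * ht

lemma jAV (ht : t * dd a b = 1) (r s : ℝ) (v : E4)
    (hv : v.ofLp = (fun i => r * a i + s * b i : Fin 4 → ℝ)) (k : Fin 4) :
    jclm a b t u v k = r * b k - s * a k := by
  rw [jclm_apply, hv, h1, h2]
  linear_combination (r * b k - s * a k) * ht

lemma nzero (v : E4) (hva : ip v a = 0) (hvb : ip v b = 0) (k : Fin 4) :
    nvec a b v k = 0 := by simp [nvec, alph, beta, hva, hvb]

lemma jW (v : E4) (hva : ip v a = 0) (hvb : ip v b = 0) (k : Fin 4) :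
    jclm a b t u v k = u * mvec a b v k := by
  rw [jclm_apply, nzero v hva hvb]; ring

lemma jW_perp_a (v : E4) (hva : ip v a = 0) (hvb : ip v b = 0) :
    ip ((jclm a b t u v : E4)) a = 0 := by
  have : ip ((jclm a b t u v : E4)) a = u * ip (mvec a b v) a := by
    simp [ip, jW v hva hvb]; ring
  rw [this, h6a, mul_zero]

lemma jW_perp_b (v : E4) (hva : ip v a = 0) (hvb : ip v b = 0) :
    ip ((jclm a b t u v : E4)) b = 0 := by
  have : ip ((jclm a b t u v : E4)) b = u * ip (mvec a b v) b := by
    simp [ip, jW v hva hvb]; ring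
  rw [this, h6b, mul_zero]

lemma jW_self (v : E4) (hva : ip v a = 0) (hvb : ip v b = 0) :
    ip ((jclm a b t u v : E4)) v = 0 := by
  have : ip ((jclm a b t u v : E4)) v = u * ip (mvec a b v) v := by
    simp [ip, jW v hva hvb]; ring
  rw [this, h8, mul_zero]

lemma jW_norm (hu : u ^ 2 * dd a b = 1) (v : E4) (hva : ip v a = 0) (hvb : ip v b = 0) :
    ip ((jclm a b t u v : E4)) ((jclm a b t u v : E4)) = ip v v := by
  have : ip ((jclm a b t u v : E4)) ((jclm a b t u v : E4)) = u ^ 2 * ip (mvec a b v) (mvec a b v) := by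
    simp [ip, jW v hva hvb]; ring
  rw [this, h9, hva, hvb]
  linear_combination ip v v * hu

lemma inner_ip (x y : E4) : (inner ℝ x y : ℝ) = ip x y := by
  simp [PiLp.inner_apply, RCLike.inner_apply, Fin.sum_univ_four, ip]; ring

lemma ip_comm (x y : Fin 4 → ℝ) : ip x y = ip y x := by simp [ip]; ring

lemma hAz (A : ℂ →L[ℝ] E4) (z : ℂ) :
    (A z).ofLp = (fun i => z.re * (A 1 : E4) i + z.im * (A Complex.I : E4) i : Fin 4 → ℝ) := by
  have hz : z = z.re • (1 : ℂ) + z.im • Complex.I := by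
    simp [Complex.real_smul, Complex.re_add_im]
  funext i
  conv_lhs => rw [hz]
  rw [map_add, map_smul, map_smul]
  simp [PiLp.add_apply, PiLp.smul_apply, smul_eq_mul]

lemma ip_sq (x : Fin 4 → ℝ) : ip x x = x 0 ^ 2 + x 1 ^ 2 + x 2 ^ 2 + x 3 ^ 2 := by
  simp [ip]; ring

lemma ip_self_nonneg (x : Fin 4 → ℝ) : 0 ≤ ip x x := by rw [ip_sq]; positivity

lemma ip_self_pos (x : E4) (hx : x ≠ 0) : 0 < ip x x := by
  rcases (ip_self_nonneg x).lt_or_eq with h | h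
  · exact h
  · exfalso; apply hx
    rw [ip_sq] at h
    have e0 : x 0 = 0 := by
      have : x 0 ^ 2 = 0 := by nlinarith [sq_nonneg (x 0), sq_nonneg (x 1), sq_nonneg (x 2), sq_nonneg (x 3)]
      exact (pow_eq_zero_iff two_ne_zero).mp this
    have e1 : x 1 = 0 := by
      have : x 1 ^ 2 = 0 := by nlinarith [sq_nonneg (x 0), sq_nonneg (x 1), sq_nonneg (x 2), sq_nonneg (x 3)]
      exact (pow_eq_zero_iff two_ne_zero).mp this
    have e2 : x 2 = 0 := by
      have : x 2 ^ 2 = 0 := by nlinarith [sq_nonneg (x 0), sq_nonneg (x 1), sq_nonneg (x 2), sq_nonneg (x 3)]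
      exact (pow_eq_zero_iff two_ne_zero).mp this
    have e3 : x 3 = 0 := by
      have : x 3 ^ 2 = 0 := by nlinarith [sq_nonneg (x 0), sq_nonneg (x 1), sq_nonneg (x 2), sq_nonneg (x 3)]
      exact (pow_eq_zero_iff two_ne_zero).mp this
    ext i
    fin_cases i <;> first | exact e0 | exact e1 | exact e2 | exact e3

lemma hdpos (A : ℂ →L[ℝ] E4) (hA : Function.Injective A) :
    0 < dd (A 1) (A Complex.I) := by
  set a : Fin 4 → ℝ := (A 1).ofLp with ha
  set b : Fin 4 → ℝ := (A Complex.I).ofLp with hb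
  have ha0 : (A 1 : E4) ≠ 0 := by
    intro h
    have : (1 : ℂ) = 0 := hA (by rw [h, map_zero])
    simp at this
  have hgaa : 0 < ip a a := ip_self_pos (A 1) ha0
  set w : E4 := WithLp.toLp 2 (fun i => ip a a * b i - ip a b * a i : Fin 4 → ℝ) with hw
  have hwne : w ≠ 0 := by
    intro h
    have hbc : A ((ip a b / ip a a : ℝ) : ℂ) = A Complex.I := by
      have : A ((ip a b / ip a a : ℝ) : ℂ) = ((ip a b / ip a a : ℝ) • A 1 : E4) := by
        rw [← map_smul]; congr 1
        simp [Complex.real_smul]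
      rw [this]
      ext i
      have hwi : ip a a * b i - ip a b * a i = 0 := congrArg (fun x : E4 => x i) h
      have : (((ip a b / ip a a : ℝ) • (A 1 : E4)) i) = (ip a b / ip a a) * a i := rfl
      rw [this]
      field_simp
      linarith [hwi]
    have := hA hbc
    have him := congrArg Complex.im this
    simp at him
  have hiww : ip w w = ip a a * dd a b := by simp [hw, ip, dd]; ring
  have hwpos : 0 < ip w w := ip_self_pos w hwne
  nlinarith [hwpos, hgaa, hiww]

lemma hmemrange (A : ℂ →L[ℝ] E4) (x : E4) :
    x ∈ LinearMap.range (A : ℂ →ₗ[ℝ] E4) ↔ ∃ z : ℂ, A z = x := by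
  simp [LinearMap.mem_range]

lemma horth (A : ℂ →L[ℝ] E4) (v : E4) :
    v ∈ (LinearMap.range (A : ℂ →ₗ[ℝ] E4))ᗮ ↔ (ip v (A 1) = 0 ∧ ip v (A Complex.I) = 0) := by
  rw [Submodule.mem_orthogonal]
  constructor
  · intro h
    constructor
    · have h1 := h (A 1) ⟨1, rfl⟩
      rw [show (inner ℝ (A 1) v : ℝ) = ip (A 1) v from by
        simp [PiLp.inner_apply, RCLike.inner_apply, Fin.sum_univ_four, ip]; ring] at h1
      rw [ip_comm]; exact h1
    · have h1 := h (A Complex.I) ⟨Complex.I, rfl⟩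
      rw [show (inner ℝ (A Complex.I) v : ℝ) = ip (A Complex.I) v from by
        simp [PiLp.inner_apply, RCLike.inner_apply, Fin.sum_univ_four, ip]; ring] at h1
      rw [ip_comm]; exact h1
  · rintro ⟨h1, h2⟩ u ⟨z, rfl⟩
    show (inner ℝ (A z) v : ℝ) = 0
    have : (inner ℝ (A z) v : ℝ) = ip (A z) v := by
      simp [PiLp.inner_apply, RCLike.inner_apply, Fin.sum_univ_four, ip]; ring
    rw [this, hAz A z]
    rw [ip_comm] at h1 h2
    simp only [ip] at h1 h2 ⊢
    linear_combination z.re * h1 + z.im * h2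

lemma hfinrankW (A : ℂ →L[ℝ] E4) (hA : Function.Injective A) :
    Module.finrank ℝ ((LinearMap.range (A : ℂ →ₗ[ℝ] E4))ᗮ : Submodule ℝ E4) = 2 := by
  have hre : (LinearMap.range (A : ℂ →ₗ[ℝ] E4) : Submodule ℝ E4) = LinearMap.range (A : ℂ →ₗ[ℝ] E4) := rfl
  have h1 : Module.finrank ℝ (LinearMap.range (A : ℂ →ₗ[ℝ] E4) : Submodule ℝ E4) = 2 := by
    rw [hre, LinearMap.finrank_range_of_inj hA, Complex.finrank_real_complex]
  have h2 := Submodule.finrank_add_finrank_orthogonal (K := (LinearMap.range (A : ℂ →ₗ[ℝ] E4) : Submodule ℝ E4)) (𝕜 := ℝ)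
  rw [h1] at h2
  have h3 : Module.finrank ℝ E4 = 4 := by simp [finrank_euclideanSpace]
  rw [h3] at h2
  omega

lemma orthospan (W : Submodule ℝ E4) (hfW : Module.finrank ℝ W = 2) (e₁ e₂ : E4)
    (he₁ : e₁ ∈ W) (he₂ : e₂ ∈ W) (hn₁ : ‖e₁‖ = 1) (hn₂ : ‖e₂‖ = 1)
    (hip : (inner ℝ e₁ e₂ : ℝ) = 0) :
    ∀ w ∈ W, ∃ c₁ c₂ : ℝ, w = c₁ • e₁ + c₂ • e₂ := by
  have q11 : ip e₁ e₁ = 1 := by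
    rw [← inner_ip, real_inner_self_eq_norm_mul_norm, hn₁]; norm_num
  have q22 : ip e₂ e₂ = 1 := by
    rw [← inner_ip, real_inner_self_eq_norm_mul_norm, hn₂]; norm_num
  have q12 : ip e₁ e₂ = 0 := by rw [← inner_ip]; exact hip
  have q21 : ip e₂ e₁ = 0 := by rw [ip_comm]; exact q12
  have hON : Orthonormal ℝ ![e₁, e₂] := by
    rw [orthonormal_iff_ite]
    intro i j
    fin_cases i <;> fin_cases j <;>
      simp only [Matrix.cons_val_zero, Matrix.cons_val_one, Matrix.head_cons] <;>
      norm_num <;>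
      first
        | simpa [ip, Fin.sum_univ_four] using q11
        | simpa [ip, Fin.sum_univ_four] using q12
        | simpa [ip, Fin.sum_univ_four] using q21
        | simpa [ip, Fin.sum_univ_four] using q22
        | simp [hn₁]
        | simp [hn₂]
        | exact hip
        | (rw [real_inner_comm]; exact hip)
  have hsp : Submodule.span ℝ (Set.range ![e₁, e₂]) = W := by
    apply Submodule.eq_of_le_of_finrank_eq
    · rw [Submodule.span_le]
      rintro x ⟨i, rfl⟩
      fin_cases i <;> simpa
    · rw [finrank_span_eq_card hON.linearIndependent, hfW]
      simp
  intro w hw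
  rw [← hsp] at hw
  obtain ⟨c, hc⟩ := (Submodule.mem_span_range_iff_exists_fun ℝ).mp hw
  refine ⟨c 0, c 1, ?_⟩
  rw [← hc, Fin.sum_univ_two]
  simp

lemma coeff1 (e₁ e₂ : E4) (hn₁ : ‖e₁‖ = 1) (hip : (inner ℝ e₁ e₂ : ℝ) = 0)
    (c₁ c₂ : ℝ) : (inner ℝ (c₁ • e₁ + c₂ • e₂) e₁ : ℝ) = c₁ := by
  have q11 : ip e₁ e₁ = 1 := by
    rw [← inner_ip, real_inner_self_eq_norm_mul_norm, hn₁]; norm_num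
  have q21 : ip e₂ e₁ = 0 := by rw [ip_comm, ← inner_ip]; exact hip
  have key : (inner ℝ (c₁ • e₁ + c₂ • e₂) e₁ : ℝ) = c₁ * ip e₁ e₁ + c₂ * ip e₂ e₁ := by
    rw [inner_ip]
    simp [ip, PiLp.add_apply, PiLp.smul_apply, smul_eq_mul]
    ring
  rw [key, q11, q21]; ring

lemma coeff2 (e₁ e₂ : E4) (hn₂ : ‖e₂‖ = 1) (hip : (inner ℝ e₁ e₂ : ℝ) = 0)
    (c₁ c₂ : ℝ) : (inner ℝ (c₁ • e₁ + c₂ • e₂) e₂ : ℝ) = c₂ := by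
  have q22 : ip e₂ e₂ = 1 := by
    rw [← inner_ip, real_inner_self_eq_norm_mul_norm, hn₂]; norm_num
  have q12 : ip e₁ e₂ = 0 := by rw [← inner_ip]; exact hip
  have key : (inner ℝ (c₁ • e₁ + c₂ • e₂) e₂ : ℝ) = c₁ * ip e₁ e₂ + c₂ * ip e₂ e₂ := by
    rw [inner_ip]
    simp [ip, PiLp.add_apply, PiLp.smul_apply, smul_eq_mul]
    ring
  rw [key, q12, q22]; ring

lemma jA (A : ℂ →L[ℝ] E4) (ht : t * dd (A 1) (A Complex.I) = 1) (z : ℂ) :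
    jclm (A 1) (A Complex.I) t u (A z) = A (Complex.I * z) := by
  ext k
  rw [jAV ht z.re z.im (A z) (hAz A z) k, hAz A (Complex.I * z)]
  simp [Complex.mul_re, Complex.mul_im]
  ring

def Jmap (A : ℂ →L[ℝ] E4) : E4 →L[ℝ] E4 :=
  jclm (A 1) (A Complex.I) (dd (A 1) (A Complex.I))⁻¹
    (Real.sqrt (dd (A 1) (A Complex.I)))⁻¹

set_option maxHeartbeats 1000000 in
lemma Jmap_props (A : ℂ →L[ℝ] E4) (hA : Function.Injective A) :
    (∀ v, Jmap A (Jmap A v) = -v) ∧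
    (∀ v ∈ LinearMap.range (A : ℂ →ₗ[ℝ] E4), Jmap A v ∈ LinearMap.range (A : ℂ →ₗ[ℝ] E4)) ∧
    (∀ w ∈ (LinearMap.range (A : ℂ →ₗ[ℝ] E4))ᗮ, Jmap A w ∈ (LinearMap.range (A : ℂ →ₗ[ℝ] E4))ᗮ) ∧
    (∀ z : ℂ, Jmap A (A z) = A (Complex.I * z)) ∧
    ∃ e₁ e₂ : E4, e₁ ∈ (LinearMap.range (A : ℂ →ₗ[ℝ] E4))ᗮ ∧ e₂ ∈ (LinearMap.range (A : ℂ →ₗ[ℝ] E4))ᗮ ∧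
      ‖e₁‖ = 1 ∧ ‖e₂‖ = 1 ∧ (inner ℝ e₁ e₂ : ℝ) = 0 ∧
      (inner ℝ (Jmap A e₁) e₂ : ℝ) = 1 ∧ (inner ℝ (Jmap A e₁) e₁ : ℝ) = 0 := by
  have hd := hdpos A hA
  have hfW := hfinrankW A hA
  have ht : (dd (A 1) (A Complex.I))⁻¹ * dd (A 1) (A Complex.I) = 1 :=
    inv_mul_cancel₀ (ne_of_gt hd)
  have hu₀ : ((Real.sqrt (dd (A 1) (A Complex.I)))⁻¹) ^ 2 * dd (A 1) (A Complex.I) = 1 := by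
    rw [inv_pow, Real.sq_sqrt hd.le]
    exact inv_mul_cancel₀ (ne_of_gt hd)
  refine ⟨jsq ht hu₀, ?_, ?_, jA A ht, ?_⟩
  · rintro v ⟨z, rfl⟩
    exact ⟨Complex.I * z, (jA A ht z).symm⟩
  · intro w hw
    obtain ⟨hwa, hwb⟩ := (horth A w).1 hw
    exact (horth A _).2 ⟨jW_perp_a w hwa hwb, jW_perp_b w hwa hwb⟩
  · have hWbot : ((LinearMap.range (A : ℂ →ₗ[ℝ] E4))ᗮ : Submodule ℝ E4) ≠ ⊥ := by
      intro h
      rw [h, finrank_bot] at hfW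
      norm_num at hfW
    obtain ⟨w, hwW, hwne⟩ := (Submodule.ne_bot_iff _).1 hWbot
    have he₁W : (‖w‖⁻¹ • w : E4) ∈ (LinearMap.range (A : ℂ →ₗ[ℝ] E4))ᗮ :=
      Submodule.smul_mem _ _ hwW
    have hn₁ : ‖(‖w‖⁻¹ • w : E4)‖ = 1 := norm_smul_inv_norm hwne
    obtain ⟨he₁a, he₁b⟩ := (horth A (‖w‖⁻¹ • w : E4)).1 he₁W
    have he₂W : Jmap A (‖w‖⁻¹ • w : E4) ∈ (LinearMap.range (A : ℂ →ₗ[ℝ] E4))ᗮ :=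
      (horth A _).2 ⟨jW_perp_a _ he₁a he₁b, jW_perp_b _ he₁a he₁b⟩
    have hnorm1 : ip (‖w‖⁻¹ • w : E4) (‖w‖⁻¹ • w : E4) = 1 := by
      rw [← inner_ip, real_inner_self_eq_norm_mul_norm, hn₁]; norm_num
    have hi22 : (inner ℝ (Jmap A (‖w‖⁻¹ • w : E4)) (Jmap A (‖w‖⁻¹ • w : E4)) : ℝ) = 1 := by
      rw [inner_ip]
      rw [show ip (Jmap A (‖w‖⁻¹ • w : E4)) (Jmap A (‖w‖⁻¹ • w : E4)) =
        ip (‖w‖⁻¹ • w : E4) (‖w‖⁻¹ • w : E4) from jW_norm hu₀ _ he₁a he₁b, hnorm1]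
    have hn₂ : ‖Jmap A (‖w‖⁻¹ • w : E4)‖ = 1 := by
      have h := hi22
      rw [real_inner_self_eq_norm_mul_norm] at h
      have h2 : (‖Jmap A (‖w‖⁻¹ • w : E4)‖ - 1) * (‖Jmap A (‖w‖⁻¹ • w : E4)‖ + 1) = 0 := by
        nlinarith [h]
      rcases mul_eq_zero.1 h2 with h3 | h3
      · linarith
      · linarith [norm_nonneg (Jmap A (‖w‖⁻¹ • w : E4))]
    have hinner12 : (inner ℝ (‖w‖⁻¹ • w : E4) (Jmap A (‖w‖⁻¹ • w : E4)) : ℝ) = 0 := by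
      rw [inner_ip, ip_comm]
      exact jW_self _ he₁a he₁b
    refine ⟨(‖w‖⁻¹ • w : E4), Jmap A (‖w‖⁻¹ • w : E4), he₁W, he₂W, hn₁, hn₂, hinner12, hi22, ?_⟩
    rw [inner_ip]
    exact jW_self _ he₁a he₁b

end S15


set_option maxHeartbeats 1000000
open S15

/-- The map `Φ : 𝒜 → 𝒥`.  For every injective real-linear `A : ℂ → ℝ⁴` and
every oriented orthonormal basis `(e₁, e₂)` of `W = (im A)^⊥` there is a
unique complex structure `J` on `ℝ⁴` preserving the splitting
`ℝ⁴ = im A ⊕ W`, making `A` complex linear, and satisfying `⟨Je₁, e₂⟩ = 1`,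
`⟨Je₁, e₁⟩ = 0`.  Moreover the assignment `A ↦ Φ(A) = J` can be made into a
map, continuous on the set of injective `A`, with these properties. -/
theorem stmt15 :
    (∀ A : ℂ →L[ℝ] E4, Function.Injective A →
      ∀ e₁ e₂ : E4, e₁ ∈ (LinearMap.range (A : ℂ →ₗ[ℝ] E4))ᗮ → e₂ ∈ (LinearMap.range (A : ℂ →ₗ[ℝ] E4))ᗮ →
        ‖e₁‖ = 1 → ‖e₂‖ = 1 → (inner ℝ e₁ e₂ : ℝ) = 0 →
        ∃! J : E4 →L[ℝ] E4,
          (∀ v, J (J v) = -v) ∧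
          (∀ v ∈ LinearMap.range (A : ℂ →ₗ[ℝ] E4), J v ∈ LinearMap.range (A : ℂ →ₗ[ℝ] E4)) ∧
          (∀ w ∈ (LinearMap.range (A : ℂ →ₗ[ℝ] E4))ᗮ, J w ∈ (LinearMap.range (A : ℂ →ₗ[ℝ] E4))ᗮ) ∧
          (∀ z : ℂ, J (A z) = A (Complex.I * z)) ∧
          (inner ℝ (J e₁) e₂ : ℝ) = 1 ∧ (inner ℝ (J e₁) e₁ : ℝ) = 0) ∧
    ∃ Φ : (ℂ →L[ℝ] E4) → (E4 →L[ℝ] E4),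
      ContinuousOn Φ {A | Function.Injective A} ∧
      ∀ A : ℂ →L[ℝ] E4, Function.Injective A →
        (∀ v, Φ A (Φ A v) = -v) ∧
        (∀ v ∈ LinearMap.range (A : ℂ →ₗ[ℝ] E4), Φ A v ∈ LinearMap.range (A : ℂ →ₗ[ℝ] E4)) ∧
        (∀ w ∈ (LinearMap.range (A : ℂ →ₗ[ℝ] E4))ᗮ, Φ A w ∈ (LinearMap.range (A : ℂ →ₗ[ℝ] E4))ᗮ) ∧
        (∀ z : ℂ, Φ A (A z) = A (Complex.I * z)) ∧
        ∃ e₁ e₂ : E4, e₁ ∈ (LinearMap.range (A : ℂ →ₗ[ℝ] E4))ᗮ ∧ e₂ ∈ (LinearMap.range (A : ℂ →ₗ[ℝ] E4))ᗮ ∧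
          ‖e₁‖ = 1 ∧ ‖e₂‖ = 1 ∧ (inner ℝ e₁ e₂ : ℝ) = 0 ∧
          (inner ℝ (Φ A e₁) e₂ : ℝ) = 1 ∧ (inner ℝ (Φ A e₁) e₁ : ℝ) = 0 := by
  constructor
  · -- Part 1: existence and uniqueness of J for given e₁, e₂
    intro A hA e₁ e₂ he₁ he₂ hn₁ hn₂ hinner
    have hd := hdpos A hA
    have hfW := hfinrankW A hA
    have hspan := orthospan _ hfW e₁ e₂ he₁ he₂ hn₁ hn₂ hinner
    obtain ⟨he₁a, he₁b⟩ := (horth A e₁).1 he₁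
    obtain ⟨he₂a, he₂b⟩ := (horth A e₂).1 he₂
    set a : Fin 4 → ℝ := (A 1).ofLp with hadef
    set b : Fin 4 → ℝ := (A Complex.I).ofLp with hbdef
    set t : ℝ := (dd a b)⁻¹ with htdef
    set u₀ : ℝ := (Real.sqrt (dd a b))⁻¹ with hu₀def
    have ht : t * dd a b = 1 := inv_mul_cancel₀ (ne_of_gt hd)
    have hu₀ : u₀ ^ 2 * dd a b = 1 := by
      rw [hu₀def, inv_pow, Real.sq_sqrt hd.le]
      exact inv_mul_cancel₀ (ne_of_gt hd)
    have hJpW : jclm a b t u₀ e₁ ∈ (LinearMap.range (A : ℂ →ₗ[ℝ] E4))ᗮ :=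
      (horth A _).2 ⟨jW_perp_a e₁ he₁a he₁b, jW_perp_b e₁ he₁a he₁b⟩
    obtain ⟨c₁, c₂, hc⟩ := hspan _ hJpW
    have hzero1 : (inner ℝ (jclm a b t u₀ e₁) e₁ : ℝ) = 0 := by
      rw [inner_ip]; exact jW_self e₁ he₁a he₁b
    rw [hc, coeff1 e₁ e₂ hn₁ hinner c₁ c₂] at hzero1
    have hnorm1 : ip e₁ e₁ = 1 := by
      rw [← inner_ip, real_inner_self_eq_norm_mul_norm, hn₁]; norm_num
    have hJnorm : (inner ℝ (jclm a b t u₀ e₁) (jclm a b t u₀ e₁) : ℝ) = 1 := by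
      rw [inner_ip, jW_norm hu₀ e₁ he₁a he₁b, hnorm1]
    rw [hc, inner_add_right, real_inner_smul_right, real_inner_smul_right,
      coeff1 e₁ e₂ hn₁ hinner, coeff2 e₁ e₂ hn₂ hinner, hzero1] at hJnorm
    have hc₂sq : c₂ ^ 2 = 1 := by nlinarith [hJnorm]
    set u : ℝ := c₂ * u₀ with hudef
    have hu : u ^ 2 * dd a b = 1 := by
      rw [hudef]
      linear_combination hu₀ + u₀ ^ 2 * dd a b * hc₂sq
    have hce : jclm a b t u₀ e₁ = c₂ • e₂ := by rw [hc, hzero1]; simp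
    have hJe₁ : jclm a b t u e₁ = e₂ := by
      ext k
      have k1 : jclm a b t u e₁ k = u * mvec a b e₁ k := jW e₁ he₁a he₁b k
      have k2 : jclm a b t u₀ e₁ k = u₀ * mvec a b e₁ k := jW e₁ he₁a he₁b k
      have k3 : jclm a b t u₀ e₁ k = c₂ * e₂ k := by rw [hce]; rfl
      have k4 : u₀ * mvec a b e₁ k = c₂ * e₂ k := by rw [← k2, k3]
      rw [k1, hudef]
      calc c₂ * u₀ * mvec a b e₁ k = c₂ * (u₀ * mvec a b e₁ k) := by ring
        _ = c₂ * (c₂ * e₂ k) := by rw [k4]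
        _ = e₂ k := by linear_combination e₂ k * hc₂sq
    refine ⟨jclm a b t u, ⟨?_, ?_, ?_, ?_, ?_, ?_⟩, ?_⟩
    · exact jsq ht hu
    · rintro v ⟨z, rfl⟩
      exact ⟨Complex.I * z, (jA (u := u) A ht z).symm⟩
    · intro w hw
      obtain ⟨hwa, hwb⟩ := (horth A w).1 hw
      exact (horth A _).2 ⟨jW_perp_a w hwa hwb, jW_perp_b w hwa hwb⟩
    · exact jA (u := u) A ht
    · rw [hJe₁, real_inner_self_eq_norm_mul_norm, hn₂]; norm_num
    · rw [hJe₁, real_inner_comm]; exact hinner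
    · rintro K ⟨hK1, hK2, hK3, hK4, hK5, hK6⟩
      have hKe₁W := hK3 e₁ he₁
      obtain ⟨d₁, d₂, hdc⟩ := hspan _ hKe₁W
      rw [hdc, coeff1 e₁ e₂ hn₁ hinner] at hK6
      rw [hdc, coeff2 e₁ e₂ hn₂ hinner] at hK5
      have hKe₁ : K e₁ = e₂ := by rw [hdc, hK6, hK5]; simp
      have hKe₂ : K e₂ = -e₁ := by rw [← hKe₁]; exact hK1 e₁
      have hJe₂ : jclm a b t u e₂ = -e₁ := by rw [← hJe₁]; exact jsq ht hu e₁
      apply ContinuousLinearMap.ext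
      intro x
      obtain ⟨y, hy, z', hz', hxyz⟩ :=
        Submodule.exists_add_mem_mem_orthogonal (K := (LinearMap.range (A : ℂ →ₗ[ℝ] E4) : Submodule ℝ E4)) x
      obtain ⟨zc, rfl⟩ := (hmemrange A y).1 hy
      obtain ⟨c₁', c₂', hzc⟩ := hspan _ hz'
      rw [hxyz, hzc]
      simp only [map_add, map_smul, hK4 zc, hKe₁, hKe₂, jA (u := u) A ht zc, hJe₁, hJe₂]
      rw [jA (u := u) A ht zc]
  · -- Part 2: the continuous map Φ
    refine ⟨Jmap, ?_, Jmap_props⟩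
    -- continuity
    have ha : ∀ i, Continuous fun A : ℂ →L[ℝ] E4 => (A 1 : E4) i := fun i =>
      ((EuclideanSpace.proj i : E4 →L[ℝ] ℝ).continuous).comp
        ((ContinuousLinearMap.apply ℝ E4 (1 : ℂ)).continuous)
    have hb : ∀ i, Continuous fun A : ℂ →L[ℝ] E4 => (A Complex.I : E4) i := fun i =>
      ((EuclideanSpace.proj i : E4 →L[ℝ] ℝ).continuous).comp
        ((ContinuousLinearMap.apply ℝ E4 Complex.I).continuous)
    have hipc : ∀ f g : (ℂ →L[ℝ] E4) → Fin 4 → ℝ,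
        (∀ i, Continuous fun A => f A i) → (∀ i, Continuous fun A => g A i) →
        Continuous fun A => ip (f A) (g A) := by
      intro f g hf hg
      simp only [ip]
      exact ((((hf 0).mul (hg 0)).add ((hf 1).mul (hg 1))).add
        ((hf 2).mul (hg 2))).add ((hf 3).mul (hg 3))
    have hdd : Continuous fun A : ℂ →L[ℝ] E4 => dd (A 1) (A Complex.I) := by
      simp only [dd]
      exact ((hipc _ _ ha ha).mul (hipc _ _ hb hb)).sub ((hipc _ _ ha hb).pow 2)
    have htc : ContinuousOn (fun A : ℂ →L[ℝ] E4 => (dd (A 1) (A Complex.I))⁻¹)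
        {A | Function.Injective A} :=
      hdd.continuousOn.inv₀ fun A hA => ne_of_gt (hdpos A hA)
    have hsc : ContinuousOn (fun A : ℂ →L[ℝ] E4 => (Real.sqrt (dd (A 1) (A Complex.I)))⁻¹)
        {A | Function.Injective A} :=
      (Real.continuous_sqrt.comp hdd).continuousOn.inv₀
        fun A hA => ne_of_gt (Real.sqrt_pos.mpr (hdpos A hA))
    have hnentc : ∀ k l, Continuous fun A : ℂ →L[ℝ] E4 => nent (A 1) (A Complex.I) k l := by
      intro k l
      simp only [nent]
      exact (((((hipc _ _ hb hb).mul (ha l)).mul (hb k)).sub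
        (((hipc _ _ ha hb).mul (hb l)).mul (hb k))).sub
        (((hipc _ _ ha ha).mul (hb l)).mul (ha k))).add
        (((hipc _ _ ha hb).mul (ha l)).mul (ha k))
    have hmentc : ∀ k l, Continuous fun A : ℂ →L[ℝ] E4 => ment (A 1) (A Complex.I) k l := by
      intro k l
      fin_cases k <;> fin_cases l <;> simp [ment] <;>
        first
          | exact continuous_const
          | exact ((ha _).mul (hb _)).sub ((ha _).mul (hb _))
          | exact ((hb _).mul (ha _)).sub ((hb _).mul (ha _))
          | exact (((ha _).mul (hb _)).sub ((ha _).mul (hb _))).neg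
          | exact (((hb _).mul (ha _)).sub ((hb _).mul (ha _))).neg
    have hjentc : ContinuousOn
        (fun A : ℂ →L[ℝ] E4 => jent (A 1) (A Complex.I) (dd (A 1) (A Complex.I))⁻¹
          (Real.sqrt (dd (A 1) (A Complex.I)))⁻¹) {A | Function.Injective A} := by
      apply continuousOn_pi.2; intro k; apply continuousOn_pi.2; intro l
      simp only [jent]
      exact (htc.mul (hnentc k l).continuousOn).add (hsc.mul (hmentc k l).continuousOn)
    exact mk_cont.comp_continuousOn hjentc
end
end
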